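/- Let n ≥ 2 and m ≥ 2 be integers with m ≤ (2/3)n, and let t : ℕ → ℕ with t_k = 0 unless 2 ≤ k ≤ m. Suppose n(n-1) = Σ_{k=2}^{m} k(k-1) t_k, f = 1 + Σ_{k=2}^{m} (k-1) t_k, and Bojanowski's inequality holds: t₂ + (3/4)t₃ + Σ_{k=5}^{m} (k - k²/4) t_k ≥ n. Then f ≥ ((m+2)n² + (3m-6)n)/(6m) + 1. -/

import Mathlib

theorem stmt3 (n m f : ℕ) (hn : 2 ≤ n) (hm : 2 ≤ m) (hmn : (m : ℝ) ≤ 2 / 3 * n)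
    (t : ℕ → ℕ) (ht0 : ∀ k, ¬(2 ≤ k ∧ k ≤ m) → t k = 0)
    (hpairs : (n : ℝ) * (n - 1) = ∑ k ∈ Finset.Icc 2 m, (k : ℝ) * (k - 1) * t k)
    (hf : (f : ℝ) = 1 + ∑ k ∈ Finset.Icc 2 m, ((k : ℝ) - 1) * t k)
    (hboj : (n : ℝ) ≤ t 2 + (3 / 4) * t 3
      + ∑ k ∈ Finset.Icc 5 m, ((k : ℝ) - (k : ℝ) ^ 2 / 4) * t k) :
    ((m + 2) * (n : ℝ) ^ 2 + (3 * m - 6) * n) / (6 * m) + 1 ≤ (f : ℝ) := by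
  have hmR : (2:ℝ) ≤ m := by exact_mod_cast hm
  have hm0 : (0:ℝ) < m := by linarith
  set lam : ℝ := ((m:ℝ)+2)/(6*m) with hlam
  set mu : ℝ := 2*((m:ℝ)-1)/(3*m) with hmu
  have hmu0 : (0:ℝ) ≤ mu := by
    rw [hmu]; apply div_nonneg <;> linarith
  -- rewrite Bojanowski's sum over Icc 2 m
  have hboj' : (n : ℝ) ≤ ∑ k ∈ Finset.Icc 2 m, ((k:ℝ) - (k:ℝ)^2/4) * t k := by
    have heq : ∑ k ∈ Finset.Icc 2 m, ((k:ℝ) - (k:ℝ)^2/4) * t k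
        = (t 2 : ℝ) + (3/4) * t 3 + ∑ k ∈ Finset.Icc 5 m, ((k:ℝ) - (k:ℝ)^2/4) * t k := by
      rcases le_or_gt 4 m with h4 | h4
      · have h1 : Finset.Icc 2 m = Finset.Ioc 1 m := by
          rw [← Finset.Icc_add_one_left_eq_Ioc]; rfl
        have h2 : Finset.Icc 5 m = Finset.Ioc 4 m := by
          rw [← Finset.Icc_add_one_left_eq_Ioc]; rfl
        rw [h1, h2, ← Finset.sum_Ioc_consecutive _ (by norm_num : 1 ≤ 4) h4]
        have h3 : Finset.Ioc 1 4 = ({2, 3, 4} : Finset ℕ) := by decide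
        rw [h3]
        norm_num
      · interval_cases m
        · have h3 : t 3 = 0 := ht0 3 (by omega)
          have h5 : Finset.Icc 5 2 = (∅ : Finset ℕ) := by decide
          have h2 : Finset.Icc 2 2 = ({2} : Finset ℕ) := by decide
          rw [h2, h5, h3]
          norm_num
        · have h5 : Finset.Icc 5 3 = (∅ : Finset ℕ) := by decide
          have h2 : Finset.Icc 2 3 = ({2, 3} : Finset ℕ) := by decide
          rw [h2, h5]
          norm_num
    rw [heq]; exact hboj
  -- termwise inequality
  have hstep : ∀ k ∈ Finset.Icc 2 m,
      lam * ((k:ℝ)*((k:ℝ)-1)*(t k : ℝ)) + mu * (((k:ℝ) - (k:ℝ)^2/4) * t k)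
        ≤ ((k:ℝ)-1)*t k := by
    intro k hk
    rw [Finset.mem_Icc] at hk
    have hk2 : (2:ℝ) ≤ k := by exact_mod_cast hk.1
    have hkm : (k:ℝ) ≤ m := by exact_mod_cast hk.2
    have htk : (0:ℝ) ≤ t k := by positivity
    have hD : (0:ℝ) ≤ 3*((k:ℝ)-2)*((m:ℝ)-k)/(6*m) := by
      apply div_nonneg
      · nlinarith
      · linarith
    have key : ((k:ℝ)-1)*t k - (lam * ((k:ℝ)*((k:ℝ)-1)*(t k : ℝ))
          + mu * (((k:ℝ) - (k:ℝ)^2/4) * t k))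
        = (3*((k:ℝ)-2)*((m:ℝ)-k)/(6*m)) * t k := by
      rw [hlam, hmu]; field_simp; ring
    have := mul_nonneg hD htk
    linarith
  have hsum := Finset.sum_le_sum hstep
  rw [Finset.sum_add_distrib, ← Finset.mul_sum, ← Finset.mul_sum] at hsum
  rw [← hpairs] at hsum
  have hmuB : mu * (n:ℝ) ≤ mu * ∑ k ∈ Finset.Icc 2 m, ((k:ℝ) - (k:ℝ)^2/4) * t k :=
    mul_le_mul_of_nonneg_left hboj' hmu0
  have hfin : lam * ((n:ℝ)*((n:ℝ)-1)) + mu * (n:ℝ) ≤ (f:ℝ) - 1 := by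
    rw [hf]
    push_cast
    linarith
  have hval : lam * ((n:ℝ)*((n:ℝ)-1)) + mu * (n:ℝ)
      = (((m:ℝ) + 2) * (n : ℝ) ^ 2 + (3 * (m:ℝ) - 6) * n) / (6 * m) := by
    rw [hlam, hmu]; field_simp; ring
  linarith
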